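/- Let R = ℂ[E₁,E₂] with the derivations e, f, h determined by e(E₁) = −2, e(E₂) = −E₁; f(E₁) = E₁² − 2E₂, f(E₂) = E₁E₂; h(E₁) = −2E₁, h(E₂) = −4E₂. Then, as ℂ-linear endomorphisms of R, these operators satisfy the 𝔰𝔩₂-relations [h,e] = 2e, [h,f] = −2f, [e,f] = h, so they equip R with the structure of an 𝔰𝔩₂-module algebra. -/
import Mathlib

open MvPolynomial

private lemma der_two (D : Derivation ℂ (MvPolynomial (Fin 2) ℂ) (MvPolynomial (Fin 2) ℂ)) :
    D (2 : MvPolynomial (Fin 2) ℂ) = 0 ∧ D (4 : MvPolynomial (Fin 2) ℂ) = 0 := by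
  have h2 := D.map_natCast 2
  have h4 := D.map_natCast 4
  norm_num at h2 h4
  exact ⟨h2, h4⟩

private lemma C_two : (MvPolynomial.C (2:ℂ) : MvPolynomial (Fin 2) ℂ) = 2 :=
  map_ofNat _ 2

/-- The derivations `e, f, h` of `R = ℂ[E₁,E₂]` determined by
`e(E₁) = -2`, `e(E₂) = -E₁`; `f(E₁) = E₁² - 2E₂`, `f(E₂) = E₁E₂`;
`h(E₁) = -2E₁`, `h(E₂) = -4E₂` satisfy the `𝔰𝔩₂`-relations
`[h,e] = 2e`, `[h,f] = -2f`, `[e,f] = h` as linear endomorphisms of `R`.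
Here `E₁ = X 0` and `E₂ = X 1` in `MvPolynomial (Fin 2) ℂ`. -/
theorem sl2_relations_on_CE1E2
    (e f h : Derivation ℂ (MvPolynomial (Fin 2) ℂ) (MvPolynomial (Fin 2) ℂ))
    (he1 : e (X 0) = -2) (he2 : e (X 1) = -X 0)
    (hf1 : f (X 0) = X 0 ^ 2 - 2 * X 1) (hf2 : f (X 1) = X 0 * X 1)
    (hh1 : h (X 0) = -2 * X 0) (hh2 : h (X 1) = -4 * X 1) :
    h.toLinearMap * e.toLinearMap - e.toLinearMap * h.toLinearMap = (2 : ℂ) • e.toLinearMap ∧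
    h.toLinearMap * f.toLinearMap - f.toLinearMap * h.toLinearMap = (-2 : ℂ) • f.toLinearMap ∧
    e.toLinearMap * f.toLinearMap - f.toLinearMap * e.toLinearMap = h.toLinearMap := by
  have key : ∀ (D1 D2 D3 : Derivation ℂ (MvPolynomial (Fin 2) ℂ) (MvPolynomial (Fin 2) ℂ)),
      ⁅D1, D2⁆ = D3 →
      D1.toLinearMap * D2.toLinearMap - D2.toLinearMap * D1.toLinearMap = D3.toLinearMap := by
    intro D1 D2 D3 hD
    have := congrArg Derivation.toLinearMap hD
    rw [Derivation.commutator_coe_linear_map] at this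
    simpa [Ring.lie_def] using this
  refine ⟨?_, ?_, ?_⟩
  · have := key h e ((2:ℂ) • e) (derivation_ext (by
      intro i
      fin_cases i <;>
        simp [Derivation.commutator_apply, he1, he2, hh1, hh2, der_two e, der_two f, der_two h, MvPolynomial.smul_eq_C_mul, C_two] <;> ring))
    simpa using this
  · have := key h f ((-2:ℂ) • f) (derivation_ext (by
      intro i
      fin_cases i <;>
        simp [Derivation.commutator_apply, hf1, hf2, hh1, hh2, map_sub, map_mul, map_pow,
          map_ofNat, der_two e, der_two f, der_two h, MvPolynomial.smul_eq_C_mul, C_two] <;> ring))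
    simpa using this
  · exact key e f h (derivation_ext (by
      intro i
      fin_cases i <;>
        simp [Derivation.commutator_apply, he1, he2, hf1, hf2, hh1, hh2, map_sub, map_mul,
          map_pow, map_ofNat, der_two e, der_two f, der_two h, MvPolynomial.smul_eq_C_mul, C_two] <;> ring))
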